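/- For a, b, p, q > 0, ∫₀^∞ (ln(a + b·e^{-px}) - ln(a + b·e^{-qx}))/x dx = ln(a/(a+b)) · ln(p/q). -/

import Mathlib

open MeasureTheory Real Set Filter Topology

noncomputable def FF (a b t x : ℝ) : ℝ :=
  -(b * Real.exp (-(t * x))) / (a + b * Real.exp (-(t * x)))

lemma denom_pos {a b : ℝ} (ha : 0 < a) (hb : 0 < b) (t x : ℝ) :
    0 < a + b * Real.exp (-(t * x)) := by positivity

lemma hasDerivAt_t {a b : ℝ} (ha : 0 < a) (hb : 0 < b) (x t : ℝ) :
    HasDerivAt (fun s => Real.log (a + b * Real.exp (-(s * x)))) (x * FF a b t x) t := by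
  have h1 : HasDerivAt (fun s : ℝ => -(s * x)) (-(1 * x)) t :=
    ((hasDerivAt_id t).mul_const x).neg
  have h4 := ((h1.exp.const_mul b).const_add a).log (denom_pos ha hb t x).ne'
  convert h4 using 1
  unfold FF
  rw [← mul_div_assoc]
  congr 1
  ring

lemma hasDerivAt_x {a b : ℝ} (ha : 0 < a) (hb : 0 < b) (t x : ℝ) :
    HasDerivAt (fun y => Real.log (a + b * Real.exp (-(t * y)))) (t * FF a b t x) x := by
  have h1 : HasDerivAt (fun y : ℝ => -(t * y)) (-(t * 1)) x :=
    ((hasDerivAt_id x).const_mul t).neg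
  have h4 := ((h1.exp.const_mul b).const_add a).log (denom_pos ha hb t x).ne'
  convert h4 using 1
  unfold FF
  rw [← mul_div_assoc]
  congr 1
  ring

lemma cont_F {a b : ℝ} (ha : 0 < a) (hb : 0 < b) :
    Continuous (fun z : ℝ × ℝ => FF a b z.1 z.2) := by
  apply Continuous.div
  · fun_prop
  · fun_prop
  · intro z; exact (denom_pos ha hb z.1 z.2).ne'

lemma F_bound {a b : ℝ} (ha : 0 < a) (hb : 0 < b) {q t x : ℝ} (hqt : q ≤ t) (hx : 0 ≤ x) :
    |FF a b t x| ≤ b / a * Real.exp (-(q * x)) := by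
  have hd := denom_pos ha hb t x
  have he : (0:ℝ) < Real.exp (-(t * x)) := Real.exp_pos _
  rw [FF, abs_div, abs_of_pos hd, abs_neg, abs_of_pos (by positivity)]
  have h2 : b * Real.exp (-(t * x)) / (a + b * Real.exp (-(t * x)))
      ≤ b * Real.exp (-(t * x)) / a := by
    gcongr
    exact le_add_of_nonneg_right (by positivity)
  have h3 : b * Real.exp (-(t * x)) / a ≤ b * Real.exp (-(q * x)) / a := by
    have : Real.exp (-(t * x)) ≤ Real.exp (-(q * x)) := Real.exp_le_exp.mpr (by nlinarith)
    gcongr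
  calc b * Real.exp (-(t * x)) / (a + b * Real.exp (-(t * x)))
      ≤ b * Real.exp (-(q * x)) / a := h2.trans h3
    _ = b / a * Real.exp (-(q * x)) := by ring

lemma int_x {a b : ℝ} (ha : 0 < a) (hb : 0 < b) {t : ℝ} (ht : 0 < t) :
    IntegrableOn (fun x => FF a b t x) (Ioi (0:ℝ)) := by
  have hmaj : IntegrableOn (fun x => b / a * Real.exp (-t * x)) (Ioi (0:ℝ)) :=
    (exp_neg_integrableOn_Ioi 0 ht).const_mul _
  refine Integrable.mono hmaj ?_ ?_
  · exact ((cont_F ha hb).comp (continuous_const.prodMk continuous_id)).aestronglyMeasurable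
  · filter_upwards [ae_restrict_mem measurableSet_Ioi] with x hx
    rw [Real.norm_eq_abs, Real.norm_eq_abs, neg_mul,
      abs_of_nonneg (by positivity : (0:ℝ) ≤ b / a * Real.exp (-(t * x)))]
    exact F_bound ha hb le_rfl (le_of_lt hx)

lemma inner_int {a b : ℝ} (ha : 0 < a) (hb : 0 < b) {t : ℝ} (ht : 0 < t) :
    ∫ x in Ioi (0:ℝ), FF a b t x = (Real.log a - Real.log (a + b)) / t := by
  have hab : (0:ℝ) < a + b := by positivity
  have hderiv : ∀ x ∈ Ici (0:ℝ),
      HasDerivAt (fun y => Real.log (a + b * Real.exp (-(t * y))) / t) (FF a b t x) x := by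
    intro x _
    have h := (hasDerivAt_x ha hb t x).div_const t
    rw [mul_div_cancel_left₀ _ ht.ne'] at h
    exact h
  have htends : Tendsto (fun y => Real.log (a + b * Real.exp (-(t * y))) / t) atTop
      (𝓝 (Real.log a / t)) := by
    apply Tendsto.div_const
    have h1 : Tendsto (fun y : ℝ => -(t * y)) atTop atBot := by
      apply tendsto_neg_atTop_atBot.comp
      exact Tendsto.const_mul_atTop ht tendsto_id
    have h2 : Tendsto (fun y : ℝ => a + b * Real.exp (-(t * y))) atTop (𝓝 (a + b * 0)) :=
      tendsto_const_nhds.add ((Real.tendsto_exp_atBot.comp h1).const_mul b)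
    rw [mul_zero, add_zero] at h2
    exact ((Real.continuousAt_log ha.ne').tendsto).comp h2
  have := integral_Ioi_of_hasDerivAt_of_tendsto' hderiv (int_x ha hb ht) htends
  rw [this]
  simp [Real.exp_zero]
  ring

theorem key (a b p q : ℝ) (ha : 0 < a) (hb : 0 < b) (hq : 0 < q) (hqp : q ≤ p) :
    ∫ x in Ioi (0:ℝ),
      (Real.log (a + b * Real.exp (-p * x)) - Real.log (a + b * Real.exp (-q * x))) / x
      = Real.log (a / (a + b)) * Real.log (p / q) := by
  have hp : 0 < p := hq.trans_le hqp
  have hab : (0:ℝ) < a + b := by positivity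
  haveI : IsFiniteMeasure (volume.restrict (Ioc q p)) :=
    ⟨by rw [Measure.restrict_apply_univ]; exact measure_Ioc_lt_top⟩
  have step1 : ∀ x ∈ Ioi (0:ℝ),
      (Real.log (a + b * Real.exp (-p * x)) - Real.log (a + b * Real.exp (-q * x))) / x
        = ∫ t in Ioc q p, FF a b t x := by
    intro x hx
    have hx0 : (0:ℝ) < x := hx
    rw [← intervalIntegral.integral_of_le hqp]
    have hFTC : ∫ t in q..p, x * FF a b t x
        = Real.log (a + b * Real.exp (-(p * x))) - Real.log (a + b * Real.exp (-(q * x))) := by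
      apply intervalIntegral.integral_eq_sub_of_hasDerivAt
        (fun t _ => hasDerivAt_t ha hb x t)
      exact (continuous_const.mul ((cont_F ha hb).comp
        (continuous_id.prodMk continuous_const))).intervalIntegrable _ _
    rw [intervalIntegral.integral_const_mul] at hFTC
    rw [div_eq_iff hx0.ne', neg_mul, neg_mul, ← hFTC]
    ring
  have hFint : Integrable (Function.uncurry (fun x t => FF a b t x))
      ((volume.restrict (Ioi (0:ℝ))).prod (volume.restrict (Ioc q p))) := by
    have hg : Integrable (fun z : ℝ × ℝ => (b / a * Real.exp (-q * z.1)) * 1)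
        ((volume.restrict (Ioi (0:ℝ))).prod (volume.restrict (Ioc q p))) :=
      Integrable.mul_prod ((exp_neg_integrableOn_Ioi 0 hq).const_mul _) (integrable_const 1)
    refine hg.mono ?_ ?_
    · exact ((cont_F ha hb).comp (continuous_swap)).aestronglyMeasurable
    · rw [Measure.prod_restrict]
      filter_upwards [ae_restrict_mem (measurableSet_Ioi.prod measurableSet_Ioc)] with z hz
      have hzx : (0:ℝ) < z.1 := hz.1
      have hzt : q < z.2 := hz.2.1
      rw [Real.norm_eq_abs, Real.norm_eq_abs, mul_one, neg_mul,
        abs_of_nonneg (by positivity : (0:ℝ) ≤ b / a * Real.exp (-(q * z.1)))]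
      exact F_bound ha hb hzt.le hzx.le
  calc ∫ x in Ioi (0:ℝ),
        (Real.log (a + b * Real.exp (-p * x)) - Real.log (a + b * Real.exp (-q * x))) / x
      = ∫ x in Ioi (0:ℝ), ∫ t in Ioc q p, FF a b t x :=
        setIntegral_congr_fun measurableSet_Ioi step1
    _ = ∫ t in Ioc q p, ∫ x in Ioi (0:ℝ), FF a b t x := integral_integral_swap hFint
    _ = ∫ t in Ioc q p, (Real.log a - Real.log (a + b)) * (1 / t) := by
        apply setIntegral_congr_fun measurableSet_Ioc
        intro t ht
        show (∫ x in Ioi (0:ℝ), FF a b t x) = _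
        rw [inner_int ha hb (hq.trans ht.1)]
        ring
    _ = (Real.log a - Real.log (a + b)) * ∫ t in Ioc q p, 1 / t := by
        rw [integral_const_mul]
    _ = Real.log (a / (a + b)) * Real.log (p / q) := by
        have h0 : (0:ℝ) ∉ Set.uIcc q p := by
          rw [Set.uIcc_of_le hqp]
          intro h
          exact absurd h.1 (not_le.mpr hq)
        rw [← intervalIntegral.integral_of_le hqp, integral_one_div h0,
          Real.log_div ha.ne' hab.ne']

theorem frullani_log_exp (a b p q : ℝ) (ha : 0 < a) (hb : 0 < b) (hp : 0 < p) (hq : 0 < q) :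
    ∫ x in Ioi (0:ℝ),
      (Real.log (a + b * Real.exp (-p * x)) - Real.log (a + b * Real.exp (-q * x))) / x
      = Real.log (a / (a + b)) * Real.log (p / q) := by
  rcases le_total q p with h | h
  · exact key a b p q ha hb hq h
  · have hk := key a b q p ha hb hp h
    have hneg : ∫ x in Ioi (0:ℝ),
        (Real.log (a + b * Real.exp (-p * x)) - Real.log (a + b * Real.exp (-q * x))) / x
        = -∫ x in Ioi (0:ℝ),
        (Real.log (a + b * Real.exp (-q * x)) - Real.log (a + b * Real.exp (-p * x))) / x := by
      rw [← integral_neg]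
      apply integral_congr_ae
      filter_upwards with x
      ring
    rw [hneg, hk, Real.log_div hp.ne' hq.ne', Real.log_div hq.ne' hp.ne']
    ring
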